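/- Let R be a collection of distinct sets, each of size at most r, such that every subset of size t+1 of the universe is contained in at most f sets of R, and suppose R contains a maximal (r,t)-set packing M of size at most k-1 (maximal meaning every set of R not in M intersects some set of M in at least t+1 elements). Then |R| ≤ (k-1) · C(r,t+1) · f. -/

import Mathlib

theorem stmt12 {α : Type*} [DecidableEq α] (r t k f : ℕ)
    (R M : Finset (Finset α))
    (hsize : ∀ S ∈ R, t + 1 ≤ S.card ∧ S.card ≤ r)
    (hbound : ∀ P : Finset α, P.card = t + 1 →
      (R.filter (fun S => P ⊆ S)).card ≤ f)
    (hM : M ⊆ R) (hMk : M.card ≤ k - 1)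
    (hMpack : ∀ S ∈ M, ∀ S' ∈ M, S ≠ S' → (S ∩ S').card ≤ t)
    (hmax : ∀ S ∈ R, S ∉ M → ∃ S' ∈ M, t + 1 ≤ (S ∩ S').card) :
    R.card ≤ (k - 1) * Nat.choose r (t + 1) * f := by
  classical
  set T : Finset (Finset α) := M.biUnion (fun S' => S'.powersetCard (t + 1)) with hT
  have hcover : R ⊆ T.biUnion (fun P => R.filter (fun S => P ⊆ S)) := by
    intro S hS
    have hex : ∃ S' ∈ M, t + 1 ≤ (S ∩ S').card := by
      by_cases hSM : S ∈ M
      · exact ⟨S, hSM, by simpa using (hsize S hS).1⟩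
      · exact hmax S hS hSM
    obtain ⟨S', hS'M, hcard⟩ := hex
    obtain ⟨P, hPsub, hPcard⟩ := Finset.exists_subset_card_eq (s := S ∩ S') (n := t + 1) hcard
    refine Finset.mem_biUnion.2 ⟨P, ?_, ?_⟩
    · exact Finset.mem_biUnion.2 ⟨S', hS'M,
        Finset.mem_powersetCard.2 ⟨hPsub.trans Finset.inter_subset_right, hPcard⟩⟩
    · exact Finset.mem_filter.2 ⟨hS, hPsub.trans Finset.inter_subset_left⟩
  calc R.card ≤ (T.biUnion (fun P => R.filter (fun S => P ⊆ S))).card :=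
        Finset.card_le_card hcover
    _ ≤ ∑ P ∈ T, (R.filter (fun S => P ⊆ S)).card := Finset.card_biUnion_le
    _ ≤ ∑ _P ∈ T, f := by
        refine Finset.sum_le_sum fun P hP => ?_
        obtain ⟨S', _, hPmem⟩ := Finset.mem_biUnion.1 hP
        exact hbound P (Finset.mem_powersetCard.1 hPmem).2
    _ = T.card * f := by rw [Finset.sum_const, smul_eq_mul]
    _ ≤ ((k - 1) * Nat.choose r (t + 1)) * f := by
        refine Nat.mul_le_mul_right f ?_
        calc T.card ≤ ∑ S' ∈ M, (S'.powersetCard (t + 1)).card := Finset.card_biUnion_le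
          _ ≤ ∑ _S' ∈ M, Nat.choose r (t + 1) := by
              refine Finset.sum_le_sum fun S' hS' => ?_
              rw [Finset.card_powersetCard]
              exact Nat.choose_le_choose _ (hsize S' (hM hS')).2
          _ = M.card * Nat.choose r (t + 1) := by rw [Finset.sum_const, smul_eq_mul]
          _ ≤ (k - 1) * Nat.choose r (t + 1) := Nat.mul_le_mul_right _ hMk
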